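/- arXiv:1401.3717 — 2 statements merged into one kernel-verified Lean document; each statement's English description precedes it below -/
import Mathlib

section
/- Let A, B, E, C, D, Θ, J be real matrices (Θ antisymmetric n×n, J antisymmetric m₀×m₀) with partitions C = [C₊; C₋], D = [D₊; D₋], E = [E₊ E₋], and set A_z := A + z^{−1}E₊C₊ + zE₋C₋, B_z := B + z^{−1}E₊D₊ + zE₋D₋. If N ≥ 5, then A_zΘ + Θ(A_z)* + B_z J (B_z)* = 0 holds for all z ∈ U_N if and only if the following three matrix equations hold: (i) AΘ + ΘAᵀ + BJBᵀ + E₊D₊JD₊ᵀE₊ᵀ + E₋D₋JD₋ᵀE₋ᵀ = 0; (ii) E₊C₊Θ + ΘC₋ᵀE₋ᵀ + BJD₋ᵀE₋ᵀ + E₊D₊JBᵀ = 0; (iii) E₊D₊JD₋ᵀE₋ᵀ = 0. -/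
open Complex Finset Matrix

noncomputable def rootOfUnity (N ℓ : ℕ) : ℂ :=
  Complex.exp (2 * Real.pi * Complex.I * ℓ / N)

/-- `A_z := A + z⁻¹E₊C₊ + zE₋C₋` (complexified). -/
noncomputable def Az {n mp mm : ℕ} (A : Matrix (Fin n) (Fin n) ℝ)
    (Ep : Matrix (Fin n) (Fin mp) ℝ) (Cp : Matrix (Fin mp) (Fin n) ℝ)
    (Em : Matrix (Fin n) (Fin mm) ℝ) (Cm : Matrix (Fin mm) (Fin n) ℝ) (z : ℂ) :
    Matrix (Fin n) (Fin n) ℂ :=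
  A.map Complex.ofReal + z⁻¹ • (Ep * Cp).map Complex.ofReal + z • (Em * Cm).map Complex.ofReal

/-- `B_z := B + z⁻¹E₊D₊ + zE₋D₋` (complexified). -/
noncomputable def Bz {n m₀ mp mm : ℕ} (B : Matrix (Fin n) (Fin m₀) ℝ)
    (Ep : Matrix (Fin n) (Fin mp) ℝ) (Dp : Matrix (Fin mp) (Fin m₀) ℝ)
    (Em : Matrix (Fin n) (Fin mm) ℝ) (Dm : Matrix (Fin mm) (Fin m₀) ℝ) (z : ℂ) :
    Matrix (Fin n) (Fin m₀) ℂ :=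
  B.map Complex.ofReal + z⁻¹ • (Ep * Dp).map Complex.ofReal + z • (Em * Dm).map Complex.ofReal


lemma expand5 {α β : Type*} [Fintype α] [Fintype β] (z w : ℂ) (h1 : z * w = 1)
    (A1 P1 Q1 Θ1 A2 P2 Q2 : Matrix α α ℂ)
    (B1 R1 S1 : Matrix α β ℂ) (J1 : Matrix β β ℂ) (B2 R2 S2 : Matrix β α ℂ) :
    (A1 + w • P1 + z • Q1) * Θ1 + Θ1 * (A2 + z • P2 + w • Q2)
      + (B1 + w • R1 + z • S1) * J1 * (B2 + z • R2 + w • S2)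
    = (w * w) • (R1 * J1 * S2)
      + w • (P1 * Θ1 + Θ1 * Q2 + B1 * J1 * S2 + R1 * J1 * B2)
      + (A1 * Θ1 + Θ1 * A2 + B1 * J1 * B2 + R1 * J1 * R2 + S1 * J1 * S2)
      + z • (Q1 * Θ1 + Θ1 * P2 + B1 * J1 * R2 + S1 * J1 * B2)
      + (z * z) • (S1 * J1 * R2) := by
  have h2 : w * z = 1 := by rw [mul_comm]; exact h1
  simp only [Matrix.add_mul, Matrix.mul_add, Matrix.smul_mul, Matrix.mul_smul, smul_smul,
    h1, h2, one_smul, smul_add]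
  abel

lemma mapH {α β : Type*} (M : Matrix α β ℝ) :
    (M.map Complex.ofReal)ᴴ = Mᵀ.map Complex.ofReal := by
  ext i j; simp [Matrix.conjTranspose_apply, Complex.conj_ofReal]

lemma mapRM {α β γ : Type*} [Fintype β] (M : Matrix α β ℝ) (P : Matrix β γ ℝ) :
    (M * P).map Complex.ofReal = M.map Complex.ofReal * P.map Complex.ofReal := by
  ext i j; simp [Matrix.mul_apply]

lemma mapRA {α β : Type*} (M P : Matrix α β ℝ) :
    (M + P).map Complex.ofReal = M.map Complex.ofReal + P.map Complex.ofReal := by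
  ext i j; simp

lemma mapZ {α β : Type*} (M : Matrix α β ℝ) (h : M.map Complex.ofReal = 0) : M = 0 := by
  ext i j
  have := congrFun (congrFun h i) j
  simpa using this

lemma keyExpand {n m₀ mp mm : ℕ}
    (A Θ : Matrix (Fin n) (Fin n) ℝ)
    (B : Matrix (Fin n) (Fin m₀) ℝ) (J : Matrix (Fin m₀) (Fin m₀) ℝ)
    (Ep : Matrix (Fin n) (Fin mp) ℝ) (Cp : Matrix (Fin mp) (Fin n) ℝ)
    (Dp : Matrix (Fin mp) (Fin m₀) ℝ)
    (Em : Matrix (Fin n) (Fin mm) ℝ) (Cm : Matrix (Fin mm) (Fin n) ℝ)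
    (Dm : Matrix (Fin mm) (Fin m₀) ℝ)
    (z w : ℂ) (h1 : z * w = 1) (hw : (starRingEnd ℂ) z = w) :
    Az A Ep Cp Em Cm z * Θ.map Complex.ofReal
      + Θ.map Complex.ofReal * (Az A Ep Cp Em Cm z)ᴴ
      + Bz B Ep Dp Em Dm z * J.map Complex.ofReal * (Bz B Ep Dp Em Dm z)ᴴ
    = (w * w) • (Ep * Dp * J * Dmᵀ * Emᵀ).map Complex.ofReal
      + w • (Ep * Cp * Θ + Θ * Cmᵀ * Emᵀ + B * J * Dmᵀ * Emᵀ + Ep * Dp * J * Bᵀ).map Complex.ofReal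
      + (A * Θ + Θ * Aᵀ + B * J * Bᵀ + Ep * Dp * J * Dpᵀ * Epᵀ + Em * Dm * J * Dmᵀ * Emᵀ).map Complex.ofReal
      + z • (Em * Cm * Θ + Θ * Cpᵀ * Epᵀ + B * J * Dpᵀ * Epᵀ + Em * Dm * J * Bᵀ).map Complex.ofReal
      + (z * z) • (Em * Dm * J * Dpᵀ * Epᵀ).map Complex.ofReal := by
  have hzne : z ≠ 0 := left_ne_zero_of_mul_eq_one h1
  have hinv : z⁻¹ = w := inv_eq_of_mul_eq_one_right h1
  have hcw : (starRingEnd ℂ) w = z := by rw [← hw, Complex.conj_conj]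
  have hAH : (Az A Ep Cp Em Cm z)ᴴ =
      Aᵀ.map Complex.ofReal + z • ((Ep * Cp)ᵀ).map Complex.ofReal
        + w • ((Em * Cm)ᵀ).map Complex.ofReal := by
    rw [Az, hinv]
    simp [Matrix.conjTranspose_add, Matrix.conjTranspose_smul, mapH, hw, hcw]
  have hBH : (Bz B Ep Dp Em Dm z)ᴴ =
      Bᵀ.map Complex.ofReal + z • ((Ep * Dp)ᵀ).map Complex.ofReal
        + w • ((Em * Dm)ᵀ).map Complex.ofReal := by
    rw [Bz, hinv]
    simp [Matrix.conjTranspose_add, Matrix.conjTranspose_smul, mapH, hw, hcw]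
  rw [hAH, hBH, Az, Bz, hinv]
  rw [expand5 z w h1]
  simp only [Matrix.transpose_mul, mapRA, mapRM, Matrix.mul_assoc]

/-- For `N ≥ 5`, the CCR-preservation identity
`A_zΘ + Θ(A_z)* + B_zJ(B_z)* = 0` holds at all `N`-th roots of unity iff three matrix
algebraic equations hold for the parameters of the building block. -/
theorem stmt_7 {n m₀ mp mm : ℕ} (N : ℕ) (hN : 5 ≤ N)
    (A Θ : Matrix (Fin n) (Fin n) ℝ) (hΘ : Θᵀ = -Θ)
    (B : Matrix (Fin n) (Fin m₀) ℝ)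
    (J : Matrix (Fin m₀) (Fin m₀) ℝ) (hJ : Jᵀ = -J)
    (Ep : Matrix (Fin n) (Fin mp) ℝ) (Cp : Matrix (Fin mp) (Fin n) ℝ)
    (Dp : Matrix (Fin mp) (Fin m₀) ℝ)
    (Em : Matrix (Fin n) (Fin mm) ℝ) (Cm : Matrix (Fin mm) (Fin n) ℝ)
    (Dm : Matrix (Fin mm) (Fin m₀) ℝ) :
    (∀ ℓ ∈ Finset.range N,
        Az A Ep Cp Em Cm (rootOfUnity N ℓ) * Θ.map Complex.ofReal
          + Θ.map Complex.ofReal * (Az A Ep Cp Em Cm (rootOfUnity N ℓ))ᴴ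
          + Bz B Ep Dp Em Dm (rootOfUnity N ℓ) * J.map Complex.ofReal
              * (Bz B Ep Dp Em Dm (rootOfUnity N ℓ))ᴴ = 0) ↔
      (A * Θ + Θ * Aᵀ + B * J * Bᵀ + Ep * Dp * J * Dpᵀ * Epᵀ + Em * Dm * J * Dmᵀ * Emᵀ = 0 ∧
       Ep * Cp * Θ + Θ * Cmᵀ * Emᵀ + B * J * Dmᵀ * Emᵀ + Ep * Dp * J * Bᵀ = 0 ∧
       Ep * Dp * J * Dmᵀ * Emᵀ = 0) := by
  constructor
  · intro h
    set ζ := Complex.exp (2 * Real.pi * Complex.I / N) with hζdef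
    have hN0 : N ≠ 0 := by omega
    have hNC : (N : ℂ) ≠ 0 := Nat.cast_ne_zero.mpr hN0
    have hroot : ∀ ℓ : ℕ, rootOfUnity N ℓ = ζ ^ ℓ := by
      intro ℓ
      rw [rootOfUnity, hζdef, ← Complex.exp_nat_mul]
      congr 1
      ring
    have hζN : ζ ^ N = 1 := by
      rw [hζdef, ← Complex.exp_nat_mul]
      have e : (N : ℂ) * (2 * Real.pi * Complex.I / N) = 2 * Real.pi * Complex.I := by
        field_simp
      rw [e, Complex.exp_two_pi_mul_I]
    have hprim := Complex.isPrimitiveRoot_exp N hN0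
    rw [← hζdef] at hprim
    have hc : ∀ j : ℕ, ∑ ℓ ∈ Finset.range N, (ζ ^ ℓ) ^ j = if N ∣ j then (N : ℂ) else 0 := by
      intro j
      rw [Finset.sum_congr rfl
        (fun ℓ _ => by rw [← pow_mul, mul_comm, pow_mul] : ∀ ℓ ∈ Finset.range N, (ζ^ℓ)^j = (ζ^j)^ℓ)]
      by_cases hd : N ∣ j
      · rw [if_pos hd]
        simp [(hprim.pow_eq_one_iff_dvd j).2 hd]
      · have hne : ζ ^ j ≠ 1 := fun hcon => hd ((hprim.pow_eq_one_iff_dvd j).1 hcon)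
        have hpow : (ζ ^ j) ^ N = 1 := by rw [← pow_mul, mul_comm, pow_mul, hζN, one_pow]
        rw [if_neg hd, geom_sum_eq hne, hpow]
        simp
    have hnd : ∀ j : ℕ, 0 < j → j < 3 * N → j ≠ N → j ≠ 2 * N → ¬ N ∣ j := by
      rintro j h1 h2 h3 h4 ⟨c, rfl⟩
      have hc3 : c < 3 := by by_contra hh; push_neg at hh; nlinarith
      interval_cases c <;> omega
    have hconjζ : (starRingEnd ℂ) ζ * ζ = 1 := by
      rw [hζdef, ← Complex.exp_conj, ← Complex.exp_add]
      have e : (starRingEnd ℂ) (2 * Real.pi * Complex.I / N) + 2 * Real.pi * Complex.I / N = 0 := by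
        simp only [map_div₀, _root_.map_mul, Complex.conj_I, Complex.conj_ofReal, map_ofNat,
          map_natCast]
        ring
      rw [e, Complex.exp_zero]
    have hzw : ∀ ℓ : ℕ, (ζ ^ ℓ) * (ζ ^ ℓ) ^ (N - 1) = 1 := by
      intro ℓ
      rw [← pow_succ', Nat.sub_add_cancel (by omega), ← pow_mul, mul_comm, pow_mul, hζN, one_pow]
    have hcz : ∀ ℓ : ℕ, (starRingEnd ℂ) (ζ ^ ℓ) * (ζ ^ ℓ) = 1 := by
      intro ℓ
      rw [map_pow, ← mul_pow, hconjζ, one_pow]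
    have hw : ∀ ℓ : ℕ, (starRingEnd ℂ) (ζ ^ ℓ) = (ζ ^ ℓ) ^ (N - 1) := by
      intro ℓ
      rw [eq_inv_of_mul_eq_one_left (hcz ℓ), inv_eq_of_mul_eq_one_right (hzw ℓ)]
    have hE : ∀ ℓ ∈ Finset.range N,
        ((ζ^ℓ)^(2*N-2)) • (Ep * Dp * J * Dmᵀ * Emᵀ).map Complex.ofReal
          + ((ζ^ℓ)^(N-1)) • (Ep * Cp * Θ + Θ * Cmᵀ * Emᵀ + B * J * Dmᵀ * Emᵀ + Ep * Dp * J * Bᵀ).map Complex.ofReal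
          + ((ζ^ℓ)^0) • (A * Θ + Θ * Aᵀ + B * J * Bᵀ + Ep * Dp * J * Dpᵀ * Epᵀ + Em * Dm * J * Dmᵀ * Emᵀ).map Complex.ofReal
          + ((ζ^ℓ)^1) • (Em * Cm * Θ + Θ * Cpᵀ * Epᵀ + B * J * Dpᵀ * Epᵀ + Em * Dm * J * Bᵀ).map Complex.ofReal
          + ((ζ^ℓ)^2) • (Em * Dm * J * Dpᵀ * Epᵀ).map Complex.ofReal = 0 := by
      intro ℓ hℓ
      have key := keyExpand A Θ B J Ep Cp Dp Em Cm Dm (ζ ^ ℓ) ((ζ ^ ℓ) ^ (N - 1))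
        (hzw ℓ) (hw ℓ)
      have h' := h ℓ hℓ
      rw [hroot ℓ] at h'
      rw [h'] at key
      rw [show 2*N-2 = (N-1)+(N-1) from by omega, pow_add, pow_zero, one_smul, pow_one, pow_two]
      exact key.symm
    have hkey : ∀ k : ℕ,
        (∑ ℓ ∈ Finset.range N, (ζ^ℓ)^(k+(2*N-2))) • (Ep * Dp * J * Dmᵀ * Emᵀ).map Complex.ofReal
          + (∑ ℓ ∈ Finset.range N, (ζ^ℓ)^(k+(N-1))) • (Ep * Cp * Θ + Θ * Cmᵀ * Emᵀ + B * J * Dmᵀ * Emᵀ + Ep * Dp * J * Bᵀ).map Complex.ofReal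
          + (∑ ℓ ∈ Finset.range N, (ζ^ℓ)^(k+0)) • (A * Θ + Θ * Aᵀ + B * J * Bᵀ + Ep * Dp * J * Dpᵀ * Epᵀ + Em * Dm * J * Dmᵀ * Emᵀ).map Complex.ofReal
          + (∑ ℓ ∈ Finset.range N, (ζ^ℓ)^(k+1)) • (Em * Cm * Θ + Θ * Cpᵀ * Epᵀ + B * J * Dpᵀ * Epᵀ + Em * Dm * J * Bᵀ).map Complex.ofReal
          + (∑ ℓ ∈ Finset.range N, (ζ^ℓ)^(k+2)) • (Em * Dm * J * Dpᵀ * Epᵀ).map Complex.ofReal = 0 := by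
      intro k
      have hz : ∑ ℓ ∈ Finset.range N, (ζ^ℓ)^k • (((ζ^ℓ)^(2*N-2)) • (Ep * Dp * J * Dmᵀ * Emᵀ).map Complex.ofReal
          + ((ζ^ℓ)^(N-1)) • (Ep * Cp * Θ + Θ * Cmᵀ * Emᵀ + B * J * Dmᵀ * Emᵀ + Ep * Dp * J * Bᵀ).map Complex.ofReal
          + ((ζ^ℓ)^0) • (A * Θ + Θ * Aᵀ + B * J * Bᵀ + Ep * Dp * J * Dpᵀ * Epᵀ + Em * Dm * J * Dmᵀ * Emᵀ).map Complex.ofReal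
          + ((ζ^ℓ)^1) • (Em * Cm * Θ + Θ * Cpᵀ * Epᵀ + B * J * Dpᵀ * Epᵀ + Em * Dm * J * Bᵀ).map Complex.ofReal
          + ((ζ^ℓ)^2) • (Em * Dm * J * Dpᵀ * Epᵀ).map Complex.ofReal) = 0 :=
        Finset.sum_eq_zero (fun ℓ hℓ => by rw [hE ℓ hℓ, smul_zero])
      simp only [smul_add, smul_smul, ← pow_add] at hz
      rw [Finset.sum_add_distrib, Finset.sum_add_distrib, Finset.sum_add_distrib,
        Finset.sum_add_distrib, ← Finset.sum_smul, ← Finset.sum_smul, ← Finset.sum_smul,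
        ← Finset.sum_smul, ← Finset.sum_smul] at hz
      exact hz
    have hsmul : ∀ (a b : ℕ) (M : Matrix (Fin a) (Fin b) ℝ),
        (N : ℂ) • M.map Complex.ofReal = 0 → M = 0 := by
      intro a b M hM
      refine mapZ M ?_
      rcases smul_eq_zero.mp hM with h' | h'
      · exact absurd h' hNC
      · exact h'
    refine ⟨?_, ?_, ?_⟩
    · -- equation (i) from k = N
      have h2 := hkey N
      rw [hc (N+(2*N-2)), hc (N+(N-1)), hc (N+0), hc (N+1), hc (N+2)] at h2
      rw [if_neg (hnd (N+(2*N-2)) (by omega) (by omega) (by omega) (by omega)),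
        if_neg (hnd (N+(N-1)) (by omega) (by omega) (by omega) (by omega)),
        if_pos (show N ∣ N + 0 by simp),
        if_neg (hnd (N+1) (by omega) (by omega) (by omega) (by omega)),
        if_neg (hnd (N+2) (by omega) (by omega) (by omega) (by omega))] at h2
      simp only [zero_smul, add_zero, zero_add] at h2
      exact hsmul _ _ _ h2
    · -- equation (ii) from k = N+1
      have h1 := hkey (N+1)
      rw [hc (N+1+(2*N-2)), hc (N+1+(N-1)), hc (N+1+0), hc (N+1+1), hc (N+1+2)] at h1
      rw [if_neg (hnd (N+1+(2*N-2)) (by omega) (by omega) (by omega) (by omega)),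
        if_pos (show N ∣ N + 1 + (N - 1) by rw [show N+1+(N-1) = 2*N from by omega]; exact dvd_mul_left N 2),
        if_neg (hnd (N+1+0) (by omega) (by omega) (by omega) (by omega)),
        if_neg (hnd (N+1+1) (by omega) (by omega) (by omega) (by omega)),
        if_neg (hnd (N+1+2) (by omega) (by omega) (by omega) (by omega))] at h1
      simp only [zero_smul, add_zero, zero_add] at h1
      exact hsmul _ _ _ h1
    · -- equation (iii) from k = N+2
      have h0 := hkey (N+2)
      rw [hc (N+2+(2*N-2)), hc (N+2+(N-1)), hc (N+2+0), hc (N+2+1), hc (N+2+2)] at h0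
      rw [if_pos (show N ∣ N + 2 + (2 * N - 2) by rw [show N+2+(2*N-2) = 3*N from by omega]; exact dvd_mul_left N 3),
        if_neg (hnd (N+2+(N-1)) (by omega) (by omega) (by omega) (by omega)),
        if_neg (hnd (N+2+0) (by omega) (by omega) (by omega) (by omega)),
        if_neg (hnd (N+2+1) (by omega) (by omega) (by omega) (by omega)),
        if_neg (hnd (N+2+2) (by omega) (by omega) (by omega) (by omega))] at h0
      simp only [zero_smul, add_zero, zero_add] at h0
      exact hsmul _ _ _ h0
  · rintro ⟨h1, h2, h3⟩ ℓ hℓ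
    have hM3 : Em * Cm * Θ + Θ * Cpᵀ * Epᵀ + B * J * Dpᵀ * Epᵀ + Em * Dm * J * Bᵀ = 0 := by
      have key : Em * Cm * Θ + Θ * Cpᵀ * Epᵀ + B * J * Dpᵀ * Epᵀ + Em * Dm * J * Bᵀ = -((Ep * Cp * Θ + Θ * Cmᵀ * Emᵀ + B * J * Dmᵀ * Emᵀ + Ep * Dp * J * Bᵀ)ᵀ) := by
        simp only [Matrix.transpose_add, Matrix.transpose_mul, Matrix.transpose_transpose,
          hΘ, hJ, Matrix.neg_mul, Matrix.mul_neg, neg_add_rev, neg_neg, Matrix.mul_assoc]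
        abel
      rw [key, h2, Matrix.transpose_zero, neg_zero]
    have hM4 : Em * Dm * J * Dpᵀ * Epᵀ = 0 := by
      have key : Em * Dm * J * Dpᵀ * Epᵀ = -((Ep * Dp * J * Dmᵀ * Emᵀ)ᵀ) := by
        simp only [Matrix.transpose_add, Matrix.transpose_mul, Matrix.transpose_transpose,
          hΘ, hJ, Matrix.neg_mul, Matrix.mul_neg, neg_neg, Matrix.mul_assoc]
      rw [key, h3, Matrix.transpose_zero, neg_zero]
    have hz1 : rootOfUnity N ℓ * (starRingEnd ℂ) (rootOfUnity N ℓ) = 1 := by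
      rw [rootOfUnity, ← Complex.exp_conj, ← Complex.exp_add]
      have e : (2 * Real.pi * Complex.I * ℓ / N)
          + (starRingEnd ℂ) (2 * Real.pi * Complex.I * ℓ / N) = 0 := by
        simp only [map_div₀, _root_.map_mul, Complex.conj_I, Complex.conj_ofReal, map_ofNat,
          map_natCast]
        ring
      rw [e, Complex.exp_zero]
    have key := keyExpand A Θ B J Ep Cp Dp Em Cm Dm (rootOfUnity N ℓ)
      ((starRingEnd ℂ) (rootOfUnity N ℓ)) hz1 rfl
    rw [key, h1, h2, h3, hM3, hM4]
    simp
end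

section
/- Let (σ_k)_{k∈ℤ} be an absolutely summable sequence of real n×n matrices with σ_{−k} = σ_kᵀ, with Fourier transform Σ_z. Let z ↦ S_z be a continuous ℂ^{n×n}-valued function on the unit circle, and set E_N := ∑_{z∈U_N} Tr(Σ̂_N(z) S_z) with Σ̂_N(z) := ∑_{|ℓ|<N}(1 − |ℓ|/N) z^{−ℓ}σ_ℓ. Then lim_{N→∞} E_N / N = (1/2πi)·∮_U Tr(Σ_z S_z) dz/z. -/
open Complex Matrix Finset Filter

attribute [local instance]
  Matrix.frobeniusNormedAddCommGroup Matrix.frobeniusNormedSpace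

/-- The Fourier transform `Σ_z := ∑_{k∈ℤ} z^{-k} σ_k`. -/
noncomputable def specDens {n : ℕ} (σ : ℤ → Matrix (Fin n) (Fin n) ℝ) (z : ℂ) :
    Matrix (Fin n) (Fin n) ℂ :=
  ∑' k : ℤ, z ^ (-k) • (σ k).map Complex.ofReal

/-- The Cesàro-truncated transform `Σ̂_N(z) := ∑_{|ℓ|<N} (1 − |ℓ|/N) z^{-ℓ} σ_ℓ`. -/
noncomputable def specDensTrunc {n : ℕ} (N : ℕ) (σ : ℤ → Matrix (Fin n) (Fin n) ℝ) (z : ℂ) :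
    Matrix (Fin n) (Fin n) ℂ :=
  ∑ ℓ ∈ Finset.Icc (1 - (N : ℤ)) ((N : ℤ) - 1),
    (((1 - |ℓ| / (N : ℝ)) : ℝ) : ℂ) • z ^ (-ℓ) • (σ ℓ).map Complex.ofReal

/-! ### Auxiliary material -/

section Aux

variable {n : ℕ}

/-- Riemann sums of a continuous function converge to the integral. -/
lemma aux_tendsto_riemann_sum (f : ℝ → ℂ) (hf : Continuous f) {b : ℝ} (hb : 0 < b) :
    Tendsto (fun N : ℕ => ((b / N : ℝ)) • ∑ j ∈ Finset.range N, f (b * j / N)) atTop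
      (nhds (∫ x in (0:ℝ)..b, f x)) := by
  rw [Metric.tendsto_atTop]
  intro ε hε
  set ε' := ε / (b + 1) with hε'def
  have hε'pos : 0 < ε' := div_pos hε (by linarith)
  have hUC := isCompact_Icc.uniformContinuousOn_of_continuous
    (s := Set.Icc (0:ℝ) b) hf.continuousOn
  rw [Metric.uniformContinuousOn_iff] at hUC
  obtain ⟨δ, hδ, hδ'⟩ := hUC ε' hε'pos
  obtain ⟨M, hM⟩ := exists_nat_gt (b / δ)
  refine ⟨M + 1, fun N hN => ?_⟩
  have hN0 : 0 < N := by omega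
  have hNpos : (0:ℝ) < N := by exact_mod_cast hN0
  have h1 : b / δ < (N:ℝ) := lt_of_lt_of_le hM (by exact_mod_cast Nat.le_of_succ_le hN)
  have hbN : b / N < δ := by
    rw [div_lt_iff₀ hNpos]
    rw [div_lt_iff₀ hδ] at h1
    nlinarith
  set a : ℕ → ℝ := fun j => b * j / N with ha
  have ha0 : a 0 = 0 := by simp [ha]
  have haN : a N = b := by simp only [ha]; exact mul_div_cancel_right₀ b hNpos.ne'
  have hstep : ∀ j : ℕ, a (j+1) - a j = b / N := by
    intro j; simp only [ha]; push_cast; field_simp; ring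
  have hmono : ∀ j : ℕ, a j ≤ a (j+1) := by
    intro j
    have : 0 ≤ b / N := by positivity
    linarith [hstep j]
  have hmem : ∀ j : ℕ, j ≤ N → a j ∈ Set.Icc (0:ℝ) b := by
    intro j hj
    constructor
    · positivity
    · rw [div_le_iff₀ hNpos]
      have : (j:ℝ) ≤ N := by exact_mod_cast hj
      nlinarith
  have hint : ∀ k : ℕ, k < N → IntervalIntegrable f MeasureTheory.volume (a k) (a (k+1)) :=
    fun k _ => hf.intervalIntegrable _ _
  have hsplit : (∫ x in (0:ℝ)..b, f x) = ∑ j ∈ Finset.range N, ∫ x in a j..a (j+1), f x := by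
    rw [intervalIntegral.sum_integral_adjacent_intervals hint, ha0, haN]
  rw [dist_eq_norm, hsplit, Finset.smul_sum, ← Finset.sum_sub_distrib]
  have hterm : ∀ j ∈ Finset.range N,
      (b / (N:ℝ)) • f (b * j / N) - (∫ x in a j..a (j+1), f x)
        = ∫ x in a j..a (j+1), (f (a j) - f x) := by
    intro j hj
    rw [intervalIntegral.integral_sub intervalIntegrable_const (hf.intervalIntegrable _ _),
      intervalIntegral.integral_const, hstep j]
  rw [Finset.sum_congr rfl hterm]
  have hbound : ∀ j ∈ Finset.range N,
      ‖∫ x in a j..a (j+1), (f (a j) - f x)‖ ≤ ε' * (b / N) := by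
    intro j hj
    rw [Finset.mem_range] at hj
    have hj1 : j + 1 ≤ N := hj
    have key : ∀ x ∈ Set.uIoc (a j) (a (j+1)), ‖f (a j) - f x‖ ≤ ε' := by
      intro x hx
      rw [Set.uIoc_of_le (hmono j)] at hx
      obtain ⟨hx1, hx2⟩ := hx
      have hxmem : x ∈ Set.Icc (0:ℝ) b := by
        obtain ⟨hl, hr⟩ := hmem j hj.le
        obtain ⟨hl2, hr2⟩ := hmem (j+1) hj1
        exact ⟨le_trans hl hx1.le, le_trans hx2 hr2⟩
      have hdist : dist (a j) x < δ := by
        rw [Real.dist_eq, abs_sub_comm, _root_.abs_of_nonneg (by linarith [hx1.le])]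
        have := hstep j
        linarith
      exact le_of_lt (by rw [← dist_eq_norm]; exact hδ' _ (hmem j hj.le) _ hxmem hdist)
    have := intervalIntegral.norm_integral_le_of_norm_le_const key
    rw [hstep j] at this
    calc ‖∫ x in a j..a (j+1), (f (a j) - f x)‖ ≤ ε' * |b / N| := this
      _ = ε' * (b / N) := by rw [_root_.abs_of_nonneg (by positivity)]
  calc ‖∑ j ∈ Finset.range N, ∫ x in a j..a (j+1), (f (a j) - f x)‖
      ≤ ∑ j ∈ Finset.range N, ‖∫ x in a j..a (j+1), (f (a j) - f x)‖ := norm_sum_le _ _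
    _ ≤ ∑ _j ∈ Finset.range N, ε' * (b / N) := Finset.sum_le_sum hbound
    _ = ε' * b := by
        rw [Finset.sum_const, Finset.card_range, nsmul_eq_mul]
        field_simp
    _ < ε := by
        rw [hε'def, div_mul_eq_mul_div, div_lt_iff₀ (by linarith)]
        nlinarith

lemma aux_entry_norm_le (A : Matrix (Fin n) (Fin n) ℂ) (i j : Fin n) : ‖A i j‖ ≤ ‖A‖ := by
  have key : ‖A i j‖₊ ≤ ‖A‖₊ := by
    rw [Matrix.frobenius_nnnorm_def]
    have h1 : ‖A i j‖₊ ^ (2:ℝ) ≤ ∑ i', ∑ j', ‖A i' j'‖₊ ^ (2:ℝ) :=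
      le_trans
        (Finset.single_le_sum (f := fun j' => ‖A i j'‖₊ ^ (2:ℝ))
          (fun _ _ => zero_le) (Finset.mem_univ j))
        (Finset.single_le_sum (f := fun i' => ∑ j', ‖A i' j'‖₊ ^ (2:ℝ))
          (fun _ _ => zero_le) (Finset.mem_univ i))
    have h2 := NNReal.rpow_le_rpow h1 (by norm_num : (0:ℝ) ≤ 1/2)
    have h3 : (‖A i j‖₊ ^ (2:ℝ)) ^ ((1:ℝ)/2) = ‖A i j‖₊ := by
      rw [← NNReal.rpow_mul]; norm_num
    rw [h3] at h2
    exact h2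
  exact_mod_cast key

lemma aux_norm_trace_le (A : Matrix (Fin n) (Fin n) ℂ) : ‖A.trace‖ ≤ n * ‖A‖ := by
  calc ‖A.trace‖ ≤ ∑ i : Fin n, ‖A i i‖ := by
        refine le_trans (le_of_eq ?_) (norm_sum_le _ _)
        rfl
    _ ≤ ∑ _i : Fin n, ‖A‖ := Finset.sum_le_sum fun i _ => aux_entry_norm_le A i i
    _ = n * ‖A‖ := by rw [Finset.sum_const, Finset.card_univ, Fintype.card_fin, nsmul_eq_mul]

lemma aux_norm_trace_mul_le (A B : Matrix (Fin n) (Fin n) ℂ) :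
    ‖(A * B).trace‖ ≤ n * (‖A‖ * ‖B‖) :=
  le_trans (aux_norm_trace_le _)
    (mul_le_mul_of_nonneg_left (Matrix.frobenius_norm_mul A B) (Nat.cast_nonneg n))

/-- The residual Cesàro weight. -/
noncomputable def auxWt (N : ℕ) (k : ℤ) : ℝ := if |k| < (N:ℤ) then (|k| : ℝ) / N else 1

lemma auxWt_nonneg (N : ℕ) (k : ℤ) : 0 ≤ auxWt N k := by
  unfold auxWt; split <;> positivity

lemma auxWt_le_one (N : ℕ) (k : ℤ) : auxWt N k ≤ 1 := by
  unfold auxWt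
  split
  · rename_i h
    have hN : (0:ℝ) < N := by
      have : (0:ℤ) ≤ |k| := abs_nonneg k
      have : (0:ℤ) < N := lt_of_le_of_lt this h
      exact_mod_cast this
    rw [div_le_one hN]
    exact_mod_cast le_of_lt h
  · exact le_refl 1

lemma auxWt_tendsto (k : ℤ) : Tendsto (fun N : ℕ => auxWt N k) atTop (nhds 0) := by
  apply Tendsto.congr' _ (tendsto_const_div_atTop_nhds_zero_nat ((|k| : ℝ)))
  filter_upwards [eventually_ge_atTop (k.natAbs + 1)] with N hN
  have : |k| < (N:ℤ) := by
    rw [Int.abs_eq_natAbs]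
    exact_mod_cast Nat.lt_of_succ_le hN
  rw [auxWt, if_pos this]

lemma aux_norm_term (σ : ℤ → Matrix (Fin n) (Fin n) ℝ) (z : ℂ) (hz : ‖z‖ = 1) (k : ℤ) :
    ‖z ^ (-k) • (σ k).map Complex.ofReal‖ = ‖σ k‖ := by
  rw [norm_smul, norm_zpow, hz, _root_.one_zpow, one_mul,
    Matrix.frobenius_norm_map_eq _ _ fun a => Complex.norm_real a]

lemma aux_summable_term (σ : ℤ → Matrix (Fin n) (Fin n) ℝ)
    (hsum : Summable fun k : ℤ => ‖σ k‖) (z : ℂ) (hz : ‖z‖ = 1) :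
    Summable fun k : ℤ => z ^ (-k) • (σ k).map Complex.ofReal :=
  Summable.of_norm_bounded hsum fun k => le_of_eq (aux_norm_term σ z hz k)

lemma aux_trunc_eq_tsum (N : ℕ) (σ : ℤ → Matrix (Fin n) (Fin n) ℝ) (z : ℂ) :
    specDensTrunc N σ z
      = ∑' k : ℤ, (((1 - auxWt N k : ℝ)) : ℂ) • z ^ (-k) • (σ k).map Complex.ofReal := by
  rw [specDensTrunc]
  rw [tsum_eq_sum (s := Finset.Icc (1 - (N : ℤ)) ((N : ℤ) - 1)) ?h]
  · refine Finset.sum_congr rfl fun k hk => ?_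
    rw [Finset.mem_Icc] at hk
    have habs : |k| < (N:ℤ) := by rw [abs_lt]; omega
    rw [auxWt, if_pos habs]
    norm_num
  · intro k hk
    rw [Finset.mem_Icc] at hk
    have habs : ¬ |k| < (N:ℤ) := by rw [abs_lt]; omega
    rw [auxWt, if_neg habs]
    norm_num

lemma aux_dens_sub_trunc (N : ℕ) (σ : ℤ → Matrix (Fin n) (Fin n) ℝ)
    (hsum : Summable fun k : ℤ => ‖σ k‖) (z : ℂ) (hz : ‖z‖ = 1) :
    specDens σ z - specDensTrunc N σ z
      = ∑' k : ℤ, ((auxWt N k : ℝ) : ℂ) • z ^ (-k) • (σ k).map Complex.ofReal := by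
  have hS1 := aux_summable_term σ hsum z hz
  have hS2 : Summable fun k : ℤ =>
      (((1 - auxWt N k : ℝ)) : ℂ) • z ^ (-k) • (σ k).map Complex.ofReal := by
    refine Summable.of_norm_bounded hsum fun k => ?_
    rw [norm_smul, aux_norm_term σ z hz k, Complex.norm_real, Real.norm_eq_abs]
    have h1 : |1 - auxWt N k| ≤ 1 := by
      rw [abs_le]
      constructor <;> nlinarith [auxWt_nonneg N k, auxWt_le_one N k]
    nlinarith [norm_nonneg (σ k)]
  rw [specDens, aux_trunc_eq_tsum N σ z, ← Summable.tsum_sub hS1 hS2]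
  refine tsum_congr fun k => ?_
  push_cast
  rw [sub_smul, one_smul]
  abel

lemma aux_trunc_bound (N : ℕ) (σ : ℤ → Matrix (Fin n) (Fin n) ℝ)
    (hsum : Summable fun k : ℤ => ‖σ k‖) (z : ℂ) (hz : ‖z‖ = 1) :
    ‖specDens σ z - specDensTrunc N σ z‖ ≤ ∑' k : ℤ, auxWt N k * ‖σ k‖ := by
  rw [aux_dens_sub_trunc N σ hsum z hz]
  have hnorm : ∀ k : ℤ,
      ‖((auxWt N k : ℝ) : ℂ) • z ^ (-k) • (σ k).map Complex.ofReal‖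
        = auxWt N k * ‖σ k‖ := by
    intro k
    rw [norm_smul, aux_norm_term σ z hz k, Complex.norm_real,
      Real.norm_of_nonneg (auxWt_nonneg N k)]
  have hsumm : Summable fun k : ℤ =>
      ‖((auxWt N k : ℝ) : ℂ) • z ^ (-k) • (σ k).map Complex.ofReal‖ := by
    refine Summable.of_nonneg_of_le (fun k => norm_nonneg _) (fun k => ?_) hsum
    rw [hnorm k]
    nlinarith [auxWt_le_one N k, auxWt_nonneg N k, norm_nonneg (σ k)]
  refine le_trans (norm_tsum_le_tsum_norm hsumm) (le_of_eq ?_)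
  exact tsum_congr hnorm

lemma aux_eps_tendsto (σ : ℤ → Matrix (Fin n) (Fin n) ℝ)
    (hsum : Summable fun k : ℤ => ‖σ k‖) :
    Tendsto (fun N : ℕ => ∑' k : ℤ, auxWt N k * ‖σ k‖) atTop (nhds 0) := by
  have h := tendsto_tsum_of_dominated_convergence (𝓕 := atTop)
    (f := fun (N : ℕ) (k : ℤ) => auxWt N k * ‖σ k‖) (g := fun _ => (0:ℝ))
    (bound := fun k => ‖σ k‖) hsum
    (fun k => by simpa using (auxWt_tendsto k).mul_const ‖σ k‖)
    (Eventually.of_forall fun N => fun k => by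
      rw [Real.norm_of_nonneg (mul_nonneg (auxWt_nonneg N k) (norm_nonneg _))]
      nlinarith [auxWt_le_one N k, auxWt_nonneg N k, norm_nonneg (σ k)])
  simpa using h

lemma aux_entry_continuous (i j : Fin n) :
    Continuous fun A : Matrix (Fin n) (Fin n) ℂ => A i j :=
  AddMonoidHomClass.continuous_of_bound
    (AddMonoidHom.mk' (fun A : Matrix (Fin n) (Fin n) ℂ => A i j) (fun _ _ => rfl)) 1
    fun A => by rw [one_mul]; exact aux_entry_norm_le A i j

lemma aux_rootOfUnity_eq (N ℓ : ℕ) :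
    rootOfUnity N ℓ = Complex.exp (((2 * Real.pi * ℓ / N : ℝ) : ℂ) * Complex.I) := by
  rw [rootOfUnity]
  congr 1
  push_cast
  ring

lemma aux_rootOfUnity_norm (N ℓ : ℕ) : ‖rootOfUnity N ℓ‖ = 1 := by
  rw [aux_rootOfUnity_eq]
  exact Complex.norm_exp_ofReal_mul_I _

end Aux

/-- For an absolutely summable symmetric weighting sequence and a continuous `z ↦ S_z` on the
unit circle, `E_N/N → (1/2πi)∮ Tr(Σ_z S_z) dz/z`, where
`E_N = ∑_{z∈U_N} Tr(Σ̂_N(z) S_z)`. -/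
theorem stmt_14 {n : ℕ} (σ : ℤ → Matrix (Fin n) (Fin n) ℝ)
    (hsum : Summable fun k : ℤ => ‖σ k‖)
    (hsymm : ∀ k : ℤ, σ (-k) = (σ k)ᵀ)
    (S : ℂ → Matrix (Fin n) (Fin n) ℂ)
    (hS : ContinuousOn S {z : ℂ | ‖z‖ = 1}) :
    Tendsto
      (fun N : ℕ => (1 / (N : ℂ)) *
        ∑ ℓ ∈ Finset.range N,
          (specDensTrunc N σ (rootOfUnity N ℓ) * S (rootOfUnity N ℓ)).trace)
      atTop
      (nhds ((1 / (2 * (Real.pi : ℂ))) *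
        ∫ φ in (-Real.pi)..Real.pi,
          (specDens σ (Complex.exp (φ * Complex.I)) *
            S (Complex.exp (φ * Complex.I))).trace)) := by
  -- notation
  set f : ℝ → ℂ := fun φ =>
    (specDens σ (Complex.exp (φ * Complex.I)) * S (Complex.exp (φ * Complex.I))).trace
    with hfdef
  set F : ℕ → ℂ := fun N => (1 / (N : ℂ)) *
      ∑ ℓ ∈ Finset.range N,
        (specDensTrunc N σ (rootOfUnity N ℓ) * S (rootOfUnity N ℓ)).trace with hFdef
  set G : ℕ → ℂ := fun N => (1 / (N : ℂ)) *
      ∑ ℓ ∈ Finset.range N,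
        (specDens σ (rootOfUnity N ℓ) * S (rootOfUnity N ℓ)).trace with hGdef
  -- basic continuity facts
  have hexp : Continuous fun φ : ℝ => Complex.exp (φ * Complex.I) := by fun_prop
  have hcirc : ∀ φ : ℝ, Complex.exp ((φ:ℂ) * Complex.I) ∈ {z : ℂ | ‖z‖ = 1} :=
    fun φ => Complex.norm_exp_ofReal_mul_I φ
  have hSc : Continuous fun φ : ℝ => S (Complex.exp (φ * Complex.I)) :=
    hS.comp_continuous hexp hcirc
  have hSDc : Continuous fun φ : ℝ => specDens σ (Complex.exp (φ * Complex.I)) := by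
    simp only [specDens]
    apply continuous_tsum (f := fun (k : ℤ) (φ : ℝ) =>
        Complex.exp ((φ:ℂ) * Complex.I) ^ (-k) • (σ k).map Complex.ofReal)
      (u := fun k => ‖σ k‖)
    · intro k
      exact (hexp.zpow₀ (-k) fun x => Or.inl (Complex.exp_ne_zero _)).smul continuous_const
    · exact hsum
    · exact fun k φ => le_of_eq (aux_norm_term σ _ (hcirc φ) k)
  have hfc : Continuous f := by
    have hf2 : f = fun φ : ℝ => ∑ i, ∑ j,
        (specDens σ (Complex.exp (φ * Complex.I))) i j
          * (S (Complex.exp (φ * Complex.I))) j i := by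
      funext φ
      simp [hfdef, Matrix.trace, Matrix.diag, Matrix.mul_apply]
    rw [hf2]
    refine continuous_finset_sum _ fun i _ => continuous_finset_sum _ fun j _ => ?_
    exact ((aux_entry_continuous i j).comp hSDc).mul ((aux_entry_continuous j i).comp hSc)
  -- periodicity
  have hper : Function.Periodic f (2 * Real.pi) := by
    intro φ
    have hexpper : Complex.exp (((φ + 2 * Real.pi : ℝ) : ℂ) * Complex.I)
        = Complex.exp ((φ:ℂ) * Complex.I) := by
      push_cast
      rw [add_mul, Complex.exp_add, Complex.exp_two_pi_mul_I, mul_one]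
    simp only [hfdef, hexpper]
  -- Riemann sum convergence for G
  have h2π : (0:ℝ) < 2 * Real.pi := by positivity
  have hR := aux_tendsto_riemann_sum f hfc h2π
  have hint : (∫ x in (-Real.pi)..Real.pi, f x) = ∫ x in (0:ℝ)..(2*Real.pi), f x := by
    have h := hper.intervalIntegral_add_eq (-Real.pi) 0
    rw [show -Real.pi + 2*Real.pi = Real.pi by ring, zero_add] at h
    exact h
  have hG : Tendsto G atTop
      (nhds ((1 / (2 * (Real.pi : ℂ))) * ∫ φ in (-Real.pi)..Real.pi, f φ)) := by
    have hmul := hR.const_mul (1 / (2 * (Real.pi : ℂ)))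
    rw [hint]
    refine Tendsto.congr (fun N => ?_) hmul
    rcases eq_or_ne N 0 with h0 | h0
    · subst h0; simp [hGdef]
    · have hNpos : (0:ℝ) < N := by exact_mod_cast Nat.pos_of_ne_zero h0
      have heq : ∀ ℓ ∈ Finset.range N,
          f (2 * Real.pi * ℓ / N)
            = (specDens σ (rootOfUnity N ℓ) * S (rootOfUnity N ℓ)).trace := by
        intro ℓ _
        rw [hfdef, aux_rootOfUnity_eq N ℓ]
      rw [hGdef]
      simp only
      rw [Finset.sum_congr rfl heq, Complex.real_smul, ← mul_assoc]
      congr 1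
      have hπ : (2 * (Real.pi : ℂ)) ≠ 0 := by
        simp [Real.pi_ne_zero]
      have hN : ((N:ℂ)) ≠ 0 := by exact_mod_cast h0
      have hcast : ((2*Real.pi/N : ℝ) : ℂ) = 2*(Real.pi:ℂ)/N := by push_cast; ring
      rw [hcast]
      field_simp
  -- bound on S over the unit circle
  have hsphere : {z : ℂ | ‖z‖ = 1} = Metric.sphere (0:ℂ) 1 := by
    ext z; simp [Metric.mem_sphere, dist_zero_right]
  rw [hsphere] at hS
  obtain ⟨C, hC⟩ := (isCompact_sphere (0:ℂ) 1).exists_bound_of_continuousOn hS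
  have hC0 : 0 ≤ C := le_trans (norm_nonneg _) (hC 1 (by simp))
  -- the error term
  set ε : ℕ → ℝ := fun N => ∑' k : ℤ, auxWt N k * ‖σ k‖ with hεdef
  have hεnonneg : ∀ N, 0 ≤ ε N := fun N =>
    tsum_nonneg fun k => mul_nonneg (auxWt_nonneg N k) (norm_nonneg _)
  have key : ∀ N : ℕ, ‖F N - G N‖ ≤ (n * C) * ε N := by
    intro N
    rcases eq_or_ne N 0 with h0 | h0
    · subst h0
      simp only [hFdef, hGdef]
      simp only [Finset.range_zero, Finset.sum_empty, mul_zero, sub_zero, norm_zero]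
      have := hεnonneg 0
      positivity
    · have hNpos : (0:ℝ) < N := by exact_mod_cast Nat.pos_of_ne_zero h0
      rw [hFdef, hGdef]
      simp only
      rw [← mul_sub, ← Finset.sum_sub_distrib, norm_mul]
      have h1N : ‖(1/(N:ℂ))‖ = 1/(N:ℝ) := by
        simp
      have hterm : ∀ ℓ ∈ Finset.range N,
          ‖(specDensTrunc N σ (rootOfUnity N ℓ) * S (rootOfUnity N ℓ)).trace
            - (specDens σ (rootOfUnity N ℓ) * S (rootOfUnity N ℓ)).trace‖
            ≤ n * (ε N * C) := by
        intro ℓ _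
        rw [← Matrix.trace_sub, ← Matrix.sub_mul]
        refine le_trans (aux_norm_trace_mul_le _ _) ?_
        have h2 : ‖specDensTrunc N σ (rootOfUnity N ℓ) - specDens σ (rootOfUnity N ℓ)‖
            ≤ ε N := by
          rw [norm_sub_rev]
          exact aux_trunc_bound N σ hsum _ (aux_rootOfUnity_norm N ℓ)
        have h3 : ‖S (rootOfUnity N ℓ)‖ ≤ C := by
          refine hC _ ?_
          simp [Metric.mem_sphere, dist_zero_right, aux_rootOfUnity_norm N ℓ]
        have h4 : (0:ℝ) ≤ ‖specDensTrunc N σ (rootOfUnity N ℓ)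
            - specDens σ (rootOfUnity N ℓ)‖ := norm_nonneg _
        refine mul_le_mul_of_nonneg_left ?_ (Nat.cast_nonneg n)
        exact mul_le_mul h2 h3 (norm_nonneg _) (hεnonneg N)
      calc ‖(1/(N:ℂ))‖ * ‖∑ ℓ ∈ Finset.range N,
            ((specDensTrunc N σ (rootOfUnity N ℓ) * S (rootOfUnity N ℓ)).trace
              - (specDens σ (rootOfUnity N ℓ) * S (rootOfUnity N ℓ)).trace)‖
          ≤ (1/(N:ℝ)) * ∑ ℓ ∈ Finset.range N, (n * (ε N * C)) := by
            rw [h1N]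
            refine mul_le_mul_of_nonneg_left ?_ (by positivity)
            exact le_trans (norm_sum_le _ _) (Finset.sum_le_sum hterm)
        _ = (n * C) * ε N := by
            rw [Finset.sum_const, Finset.card_range, nsmul_eq_mul]
            field_simp
  have hFG : Tendsto (fun N => F N - G N) atTop (nhds 0) := by
    refine squeeze_zero_norm key ?_
    have := (aux_eps_tendsto σ hsum).const_mul ((n:ℝ) * C)
    simpa using this
  have hfinal := hFG.add hG
  rw [zero_add] at hfinal
  refine Tendsto.congr (fun N => ?_) hfinal
  simp
end
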